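/- Let C be a finite tensor category over an algebraically closed field k and F : C → C a right exact k-linear strong monoidal functor. Then the group Aut_⊗(F) of monoidal natural automorphisms of F is finite. In particular, Aut_⊗(id_C) is finite. -/

import Mathlib

open CategoryTheory CategoryTheory.MonoidalCategory CategoryTheory.Limits

attribute [local instance] CategoryTheory.Abelian.hasFiniteBiproducts

set_option linter.unusedSectionVars false
set_option maxHeartbeats 1000000

namespace MonoidalNatAutAux

variable {k : Type*} [Field k] [IsAlgClosed k]
variable {C : Type*} [Category C] [Abelian C] [Linear k C]
  [MonoidalCategory C] [MonoidalPreadditive C] [MonoidalLinear k C]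

lemma smul_tensorHom {W X Y Z : C} (r : k) (f : W ⟶ X) (g : Y ⟶ Z) :
    (r • f) ⊗ₘ g = r • (f ⊗ₘ g) := by
  rw [MonoidalCategory.tensorHom_def, MonoidalCategory.tensorHom_def, MonoidalLinear.smul_whiskerRight, Linear.smul_comp]

lemma tensorHom_smul {W X Y Z : C} (r : k) (f : W ⟶ X) (g : Y ⟶ Z) :
    f ⊗ₘ (r • g) = r • (f ⊗ₘ g) := by
  rw [MonoidalCategory.tensorHom_def, MonoidalCategory.tensorHom_def, MonoidalLinear.whiskerLeft_smul, Linear.comp_smul]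

lemma tensorHom_sub {W X Y Z : C} (f : W ⟶ X) (g h : Y ⟶ Z) :
    f ⊗ₘ (g - h) = f ⊗ₘ g - f ⊗ₘ h := by
  have h1 : f ⊗ₘ ((g - h) + h) = f ⊗ₘ (g - h) + f ⊗ₘ h := MonoidalPreadditive.tensor_add _ _ _
  rw [sub_add_cancel] at h1
  rw [h1]; abel

section Peel

variable [RigidCategory C] [Simple (𝟙_ C)]
  [∀ X : C, IsArtinianObject X] [∀ X Y : C, FiniteDimensional k (X ⟶ Y)]

/-- If `u i : 𝟙 ⟶ M` are linearly independent, the induced map `𝟙^{⊕ n} ⟶ M` is mono. -/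
lemma mono_desc_of_linearIndependent {n : ℕ} {M : C} (u : Fin n → (𝟙_ C ⟶ M))
    (hu : LinearIndependent k u) :
    Mono (biproduct.desc u) := by
  set e := biproduct.desc u with he
  have hker : IsZero (kernel e) := by
    by_contra hK
    have hψm : Mono (simpleSubobjectArrow hK ≫ kernel.ι e) := mono_comp _ _
    set ψ : simpleSubobject hK ⟶ ⨁ (fun _ : Fin n => 𝟙_ C) :=
      simpleSubobjectArrow hK ≫ kernel.ι e with hψdef
    have hψ : ψ ≠ 0 := by
      intro h0
      apply id_nonzero (simpleSubobject hK)
      have : 𝟙 (simpleSubobject hK) ≫ ψ = 0 ≫ ψ := by rw [h0]; simp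
      exact (cancel_mono ψ).mp this
    obtain ⟨j, hj⟩ : ∃ j, ψ ≫ biproduct.π (fun _ : Fin n => 𝟙_ C) j ≠ 0 := by
      by_contra h'
      push_neg at h'
      exact hψ (biproduct.hom_ext _ _ (fun j => by simp [h' j]))
    haveI : IsIso (ψ ≫ biproduct.π (fun _ : Fin n => 𝟙_ C) j) := isIso_of_hom_simple hj
    have hψe : ψ ≫ e = 0 := by rw [hψdef, Category.assoc, kernel.condition, comp_zero]
    have hme : (inv (ψ ≫ biproduct.π (fun _ : Fin n => 𝟙_ C) j) ≫ ψ) ≫ e = 0 := by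
      rw [Category.assoc, hψe, comp_zero]
    choose c hc using fun l => endomorphism_simple_eq_smul_id k
      ((inv (ψ ≫ biproduct.π (fun _ : Fin n => 𝟙_ C) j) ≫ ψ) ≫
        biproduct.π (fun _ : Fin n => 𝟙_ C) l)
    have key : ∑ l, c l • u l = 0 := by
      calc ∑ l, c l • u l
          = ∑ l, (c l • 𝟙 (𝟙_ C)) ≫ u l := by simp [Linear.smul_comp]
        _ = ∑ l, ((inv (ψ ≫ biproduct.π (fun _ : Fin n => 𝟙_ C) j) ≫ ψ) ≫
              biproduct.π (fun _ : Fin n => 𝟙_ C) l) ≫ u l := by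
            refine Finset.sum_congr rfl fun l _ => ?_; rw [hc l]
        _ = ∑ l, (inv (ψ ≫ biproduct.π (fun _ : Fin n => 𝟙_ C) j) ≫ ψ) ≫
              (biproduct.π (fun _ : Fin n => 𝟙_ C) l ≫
               biproduct.ι (fun _ : Fin n => 𝟙_ C) l) ≫ e := by
            simp [he, Category.assoc]
        _ = (inv (ψ ≫ biproduct.π (fun _ : Fin n => 𝟙_ C) j) ≫ ψ) ≫
              (∑ l, biproduct.π (fun _ : Fin n => 𝟙_ C) l ≫
               biproduct.ι (fun _ : Fin n => 𝟙_ C) l) ≫ e := by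
            rw [Preadditive.sum_comp, Preadditive.comp_sum]
        _ = 0 := by rw [biproduct.total, Category.id_comp, hme]
    have hc0 : ∀ l, c l = 0 := Fintype.linearIndependent_iff.mp hu c key
    have hmj : (inv (ψ ≫ biproduct.π (fun _ : Fin n => 𝟙_ C) j) ≫ ψ) ≫
        biproduct.π (fun _ : Fin n => 𝟙_ C) j = 𝟙 (𝟙_ C) := by
      rw [Category.assoc, IsIso.inv_hom_id]
    apply id_nonzero (𝟙_ C)
    rw [← hmj, ← hc j, hc0 j, zero_smul]
  exact Preadditive.mono_of_kernel_zero (hker.eq_of_src _ _)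

/-- Peeling lemma for morphisms out of the unit. -/
lemma peel_unit {n : ℕ} {M X Y : C} (u : Fin n → (𝟙_ C ⟶ M))
    (hu : LinearIndependent k u) (b : Fin n → (X ⟶ Y))
    (h : ∑ i, u i ⊗ₘ b i = 0) : ∀ i, b i = 0 := by
  classical
  set e := biproduct.desc u with he
  haveI : Mono e := mono_desc_of_linearIndependent u hu
  haveI : (tensorRight Y).PreservesMonomorphisms :=
    Functor.preservesMonomorphisms_of_adjunction (tensorRightAdjunction (ᘁY) Y)
  haveI hmono : Mono (e ▷ Y) := (tensorRight Y).map_mono e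
  have h2 : (∑ i, biproduct.ι (fun _ : Fin n => 𝟙_ C) i ⊗ₘ b i) ≫ (e ▷ Y) = 0 := by
    rw [Preadditive.sum_comp]
    have h1 : ∀ i, (biproduct.ι (fun _ : Fin n => 𝟙_ C) i ⊗ₘ b i) ≫ (e ▷ Y) = u i ⊗ₘ b i := by
      intro i
      rw [← tensorHom_id e Y, tensorHom_comp_tensorHom, Category.comp_id, he, biproduct.ι_desc]
    rw [Finset.sum_congr rfl fun i _ => h1 i, h]
  have h3 : (∑ i, biproduct.ι (fun _ : Fin n => 𝟙_ C) i ⊗ₘ b i) = 0 :=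
    (cancel_mono (e ▷ Y)).mp (by rw [h2, zero_comp])
  intro j
  have h4 := congrArg (fun t => t ≫ (biproduct.π (fun _ : Fin n => 𝟙_ C) j ⊗ₘ 𝟙 Y)) h3
  simp only [Preadditive.sum_comp, tensorHom_comp_tensorHom, Category.comp_id, zero_comp] at h4
  have h5 : ∀ i, (biproduct.ι (fun _ : Fin n => 𝟙_ C) i ≫
      biproduct.π (fun _ : Fin n => 𝟙_ C) j) ⊗ₘ b i
      = if i = j then 𝟙 (𝟙_ C) ⊗ₘ b i else 0 := by
    intro i
    rw [biproduct.ι_π]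
    split_ifs with hij
    · subst hij; simp
    · simp [MonoidalPreadditive.zero_tensor]
  rw [Finset.sum_congr rfl fun i _ => h5 i, Finset.sum_ite_eq' Finset.univ j
    (fun i => 𝟙 (𝟙_ C) ⊗ₘ b i)] at h4
  simp only [Finset.mem_univ, if_true] at h4
  have h6 : 𝟙_ C ◁ b j = 0 := by rw [← id_tensorHom]; exact h4
  have := congrArg (fun t => (λ_ X).inv ≫ t ≫ (λ_ Y).hom) h6
  simpa using this

lemma retraction_eq {A B : C} (f : A ⟶ B) :
    (ρ_ A).inv ≫ (A ◁ (η_ (ᘁA) A ≫ ((ᘁA) ◁ f))) ≫ (α_ A (ᘁA) B).inv ≫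
      ((ε_ (ᘁA) A) ▷ B) ≫ (λ_ B).hom = f := by
  rw [MonoidalCategory.whiskerLeft_comp]
  slice_lhs 3 4 => rw [associator_inv_naturality_right]
  slice_lhs 4 5 => rw [whisker_exchange]
  slice_lhs 5 6 => rw [leftUnitor_naturality]
  slice_lhs 2 4 => rw [ExactPairing.coevaluation_evaluation]
  simp

/-- The dualization linear map `Hom(A,B) → Hom(𝟙, ᘁA ⊗ₘ B)`. -/
@[simps]
def dualizeMap (A B : C) : (A ⟶ B) →ₗ[k] (𝟙_ C ⟶ (ᘁA) ⊗ B) where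
  toFun f := η_ (ᘁA) A ≫ ((ᘁA) ◁ f)
  map_add' f g := by rw [MonoidalPreadditive.whiskerLeft_add, Preadditive.comp_add]
  map_smul' r f := by rw [MonoidalLinear.whiskerLeft_smul, Linear.comp_smul]; rfl

lemma dualizeMap_injective (A B : C) : Function.Injective (dualizeMap (k := k) A B) := by
  intro f g hfg
  have h1 := congrArg (fun t => (ρ_ A).inv ≫ (A ◁ t) ≫ (α_ A (ᘁA) B).inv ≫
      ((ε_ (ᘁA) A) ▷ B) ≫ (λ_ B).hom) hfg
  simpa only [dualizeMap_apply, retraction_eq] using h1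

/-- Peeling lemma: if the `a i` are linearly independent and `∑ aᵢ ⊗ₘ bᵢ = 0`
then all `b i` vanish. -/
lemma peel_hom {n : ℕ} {A B X Y : C} (a : Fin n → (A ⟶ B))
    (ha : LinearIndependent k a) (b : Fin n → (X ⟶ Y))
    (h : ∑ i, a i ⊗ₘ b i = 0) : ∀ i, b i = 0 := by
  have transport : ∀ (f : A ⟶ B) (g : X ⟶ Y),
      (dualizeMap (k := k) A B f) ⊗ₘ g =
        (η_ (ᘁA) A ⊗ₘ 𝟙 X) ≫ (α_ (ᘁA) A X).hom ≫ ((ᘁA) ◁ (f ⊗ₘ g)) ≫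
          (α_ (ᘁA) B Y).inv := by
    intro f g
    rw [dualizeMap_apply]
    calc (η_ (ᘁA) A ≫ ((ᘁA) ◁ f)) ⊗ₘ g
        = (η_ (ᘁA) A ≫ ((ᘁA) ◁ f)) ⊗ₘ (𝟙 X ≫ g) := by rw [Category.id_comp]
      _ = (η_ (ᘁA) A ⊗ₘ 𝟙 X) ≫ (((ᘁA) ◁ f) ⊗ₘ g) := by rw [← tensorHom_comp_tensorHom]
      _ = (η_ (ᘁA) A ⊗ₘ 𝟙 X) ≫ ((𝟙 (ᘁA) ⊗ₘ f) ⊗ₘ g) := by rw [id_tensorHom]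
      _ = (η_ (ᘁA) A ⊗ₘ 𝟙 X) ≫ (α_ (ᘁA) A X).hom ≫ (𝟙 (ᘁA) ⊗ₘ (f ⊗ₘ g)) ≫
            (α_ (ᘁA) B Y).inv := by
          slice_rhs 2 3 => rw [← associator_naturality]
          simp
      _ = (η_ (ᘁA) A ⊗ₘ 𝟙 X) ≫ (α_ (ᘁA) A X).hom ≫ ((ᘁA) ◁ (f ⊗ₘ g)) ≫
            (α_ (ᘁA) B Y).inv := by rw [id_tensorHom]
  have hsum : ∑ i, (dualizeMap (k := k) A B (a i)) ⊗ₘ b i = 0 := by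
    rw [Finset.sum_congr rfl fun i _ => transport (a i) (b i)]
    simp only [← Preadditive.comp_sum, ← Preadditive.sum_comp, ← whiskerLeft_sum]
    rw [h]
    simp
  exact peel_unit (fun i => dualizeMap (k := k) A B (a i))
    (ha.map' _ (LinearMap.ker_eq_bot.mpr (dualizeMap_injective A B))) b hsum

end Peel

section FunctorPart

variable (F : C ⥤ C) [F.Additive] (P : C)

lemma eq_zero_of_app_eq_zero [PreservesFiniteColimits F]
    (hP : ∀ X : C, ∃ (n : ℕ) (q : (⨁ fun _ : Fin n => P) ⟶ X), Epi q)
    (g : F ⟶ F) (hg : g.app P = 0) : g = 0 := by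
  ext X
  obtain ⟨n, q, hq⟩ := hP X
  haveI := hq
  haveI : Epi (F.map q) := F.map_epi q
  have hT : g.app (⨁ fun _ : Fin n => P) = 0 := by
    calc g.app (⨁ fun _ : Fin n => P)
        = g.app _ ≫ F.map (𝟙 (⨁ fun _ : Fin n => P)) := by simp
      _ = ∑ j, g.app _ ≫ F.map (biproduct.π (fun _ : Fin n => P) j) ≫
            F.map (biproduct.ι (fun _ : Fin n => P) j) := by
          rw [← biproduct.total, Functor.map_sum, Preadditive.comp_sum]
          refine Finset.sum_congr rfl fun j _ => ?_
          rw [Functor.map_comp]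
      _ = ∑ j, F.map (biproduct.π (fun _ : Fin n => P) j) ≫ g.app P ≫
            F.map (biproduct.ι (fun _ : Fin n => P) j) := by
          refine Finset.sum_congr rfl fun j _ => ?_
          rw [← Category.assoc, ← g.naturality, Category.assoc]
      _ = 0 := by simp [hg]
  have h0 : F.map q ≫ g.app X = 0 := by
    rw [g.naturality q, hT, zero_comp]
  rw [NatTrans.app_zero]
  exact (cancel_epi (F.map q)).mp (by rw [h0, comp_zero])

/-- Evaluation of a natural transformation at `P`, as a linear map. -/
@[simps]
def appLinearMap : (F ⟶ F) →ₗ[k] (F.obj P ⟶ F.obj P) where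
  toFun g := g.app P
  map_add' _ _ := rfl
  map_smul' _ _ := rfl

lemma appLinearMap_injective [PreservesFiniteColimits F]
    (hP : ∀ X : C, ∃ (n : ℕ) (q : (⨁ fun _ : Fin n => P) ⟶ X), Epi q) :
    Function.Injective (appLinearMap (k := k) F P) := by
  rw [← LinearMap.ker_eq_bot, LinearMap.ker_eq_bot']
  intro g hg
  exact eq_zero_of_app_eq_zero F P hP g hg

lemma finiteDimensional_natTrans [PreservesFiniteColimits F]
    [∀ X Y : C, FiniteDimensional k (X ⟶ Y)]
    (hP : ∀ X : C, ∃ (n : ℕ) (q : (⨁ fun _ : Fin n => P) ⟶ X), Epi q) :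
    FiniteDimensional k (F ⟶ F) :=
  FiniteDimensional.of_injective (appLinearMap (k := k) F P)
    (appLinearMap_injective F P hP)

end FunctorPart

section Monoidal

open CategoryTheory.Functor.LaxMonoidal CategoryTheory.Functor.OplaxMonoidal

variable [RigidCategory C] [Simple (𝟙_ C)]
  [∀ X : C, IsArtinianObject X] [∀ X Y : C, FiniteDimensional k (X ⟶ Y)]
variable (F : C ⥤ C) [F.Additive] (P : C) [F.Monoidal]

lemma monoidal_tensor_eq (τ : F ⟶ F) (hτ : NatTrans.IsMonoidal τ) (X Y : C) :
    τ.app X ⊗ₘ τ.app Y = μ F X Y ≫ τ.app (X ⊗ Y) ≫ δ F X Y := by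
  have h := hτ.tensor X Y
  have := congrArg (fun t => t ≫ δ F X Y) h
  simpa only [Category.assoc, Functor.Monoidal.μ_δ, Category.comp_id] using this.symm

lemma monoidal_ne_zero (τ : F ⟶ F) (hτ : NatTrans.IsMonoidal τ) : τ ≠ 0 := by
  intro h0
  have hu := hτ.unit
  rw [h0, NatTrans.app_zero, comp_zero] at hu
  apply id_nonzero (𝟙_ C)
  calc 𝟙 (𝟙_ C) = ε F ≫ η F := (Functor.Monoidal.ε_η (F := F)).symm
    _ = 0 := by rw [← hu, zero_comp]

lemma grouplike_step [PreservesFiniteColimits F]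
    (hP : ∀ X : C, ∃ (n : ℕ) (q : (⨁ fun _ : Fin n => P) ⟶ X), Epi q)
    {m : ℕ} (g₀ : F ⟶ F) (h : Fin m → (F ⟶ F))
    (hm : ∀ j, NatTrans.IsMonoidal (h j)) (h₀ : NatTrans.IsMonoidal g₀)
    (hind : LinearIndependent k h) (lam : Fin m → k)
    (hrel : g₀ = ∑ j, lam j • h j) :
    ∀ j, lam j • (g₀ - h j) = 0 := by
  have key : ∀ (Y : C) (j : Fin m), (lam j • (g₀ - h j)).app Y = 0 := by
    intro Y
    refine peel_hom (k := k) (fun j => (h j).app P) ?_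
      (fun j => (lam j • (g₀ - h j)).app Y) ?_
    · have := hind.map' (appLinearMap (k := k) F P)
        (LinearMap.ker_eq_bot.mpr (appLinearMap_injective F P hP))
      simpa only [Function.comp_def, appLinearMap_apply] using this
    · have e1 : ∀ j, (h j).app P ⊗ₘ (lam j • (g₀ - h j)).app Y
          = lam j • ((h j).app P ⊗ₘ g₀.app Y) - lam j • ((h j).app P ⊗ₘ (h j).app Y) := by
        intro j
        rw [NatTrans.app_smul, NatTrans.app_sub, tensorHom_smul, tensorHom_sub, smul_sub]
      rw [Finset.sum_congr rfl fun j _ => e1 j, Finset.sum_sub_distrib]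
      have e2 : ∑ j, lam j • ((h j).app P ⊗ₘ g₀.app Y) = g₀.app P ⊗ₘ g₀.app Y := by
        rw [← Finset.sum_congr rfl fun j _ => smul_tensorHom (lam j) ((h j).app P) (g₀.app Y),
          ← sum_tensor]
        congr 1
        rw [hrel]
        simp [NatTrans.app_sum, NatTrans.app_smul]
      have e3 : ∑ j, lam j • ((h j).app P ⊗ₘ (h j).app Y) = g₀.app P ⊗ₘ g₀.app Y := by
        have e4 : ∀ j, lam j • ((h j).app P ⊗ₘ (h j).app Y)
            = lam j • (μ F P Y ≫ (h j).app (P ⊗ Y) ≫ δ F P Y) := by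
          intro j; rw [monoidal_tensor_eq F (h j) (hm j)]
        rw [Finset.sum_congr rfl fun j _ => e4 j]
        rw [monoidal_tensor_eq F g₀ h₀]
        have e5 : ∑ j, lam j • (μ F P Y ≫ (h j).app (P ⊗ Y) ≫ δ F P Y)
            = μ F P Y ≫ (∑ j, lam j • (h j).app (P ⊗ Y)) ≫ δ F P Y := by
          rw [Preadditive.sum_comp, Preadditive.comp_sum]
          refine Finset.sum_congr rfl fun j _ => ?_
          rw [Linear.smul_comp, Linear.comp_smul]
        rw [e5]
        congr 2
        rw [hrel]
        simp [NatTrans.app_sum, NatTrans.app_smul]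
      rw [e2, e3, sub_self]
  intro j
  ext Y
  rw [key Y j, NatTrans.app_zero]

lemma monoidal_linearIndependent [PreservesFiniteColimits F]
    (hP : ∀ X : C, ∃ (n : ℕ) (q : (⨁ fun _ : Fin n => P) ⟶ X), Epi q) :
    ∀ (n : ℕ) (g : Fin n → (F ⟶ F)), (∀ i, NatTrans.IsMonoidal (g i)) →
      Function.Injective g → LinearIndependent k g := by
  intro n
  induction n using Nat.strong_induction_on with
  | _ n IH =>
    intro g hmono hinj
    by_contra hdep
    obtain ⟨c, hc, i₀, hi₀⟩ := Fintype.not_linearIndependent_iff.mp hdep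
    by_cases hall : ∀ i, c i ≠ 0
    · match n, g, hmono, hinj, c, hc, i₀, hi₀, hall, IH with
      | Nat.succ m, g, hmono, hinj, c, hc, i₀, hi₀, hall, IH =>
        set h : Fin m → (F ⟶ F) := fun j => g (i₀.succAbove j) with hh
        have hinj' : Function.Injective h :=
          hinj.comp (Fin.succAbove_right_injective)
        have hind : LinearIndependent k h :=
          IH m (Nat.lt_succ_self m) h (fun j => hmono _) hinj'
        set lam : Fin m → k := fun j => -(c i₀)⁻¹ * c (i₀.succAbove j) with hlam
        have hrel : g i₀ = ∑ j, lam j • h j := by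
          have hsplit : c i₀ • g i₀ + ∑ j, c (i₀.succAbove j) • g (i₀.succAbove j) = 0 :=
            (Fin.sum_univ_succAbove (fun i => c i • g i) i₀).symm.trans hc
          have hmain : g i₀ = -(c i₀)⁻¹ • ∑ j, c (i₀.succAbove j) • g (i₀.succAbove j) := by
            have h1 : c i₀ • g i₀ = -∑ j, c (i₀.succAbove j) • g (i₀.succAbove j) :=
              eq_neg_of_add_eq_zero_left hsplit
            have := congrArg (fun t => (c i₀)⁻¹ • t) h1
            simpa [smul_smul, inv_mul_cancel₀ (hall i₀)] using this
          rw [hmain, Finset.smul_sum]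
          refine Finset.sum_congr rfl fun j _ => ?_
          rw [hlam, hh, smul_smul]
        have hstep := grouplike_step (k := k) F P hP (g i₀) h (fun j => hmono _)
          (hmono i₀) hind lam hrel
        rcases Nat.eq_zero_or_pos m with hm | hm
        · subst hm
          have : g i₀ = 0 := by rw [hrel, Finset.univ_eq_empty, Finset.sum_empty]
          exact monoidal_ne_zero F (g i₀) (hmono i₀) this
        · have j0 : Fin m := ⟨0, hm⟩
          have hlj : lam j0 ≠ 0 := by
            simp only [hlam, neg_mul, ne_eq, neg_eq_zero, mul_eq_zero, inv_eq_zero, not_or]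
            exact ⟨hall i₀, hall _⟩
          have hz := hstep j0
          rw [smul_eq_zero] at hz
          rcases hz with h' | h'
          · exact hlj h'
          · rw [sub_eq_zero] at h'
            have := hinj h'
            exact Fin.succAbove_ne i₀ j0 this.symm
    · push_neg at hall
      obtain ⟨i₁, hi₁⟩ := hall
      have hne : i₀ ≠ i₁ := fun h => hi₀ (h ▸ hi₁)
      match n, g, hmono, hinj, c, hc, i₀, hi₀, i₁, hi₁, hne, IH with
      | Nat.succ m, g, hmono, hinj, c, hc, i₀, hi₀, i₁, hi₁, hne, IH =>
        have hind : LinearIndependent k (fun j => g (i₁.succAbove j)) :=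
          IH m (Nat.lt_succ_self m) _ (fun j => hmono _)
            (hinj.comp (Fin.succAbove_right_injective))
        have h0 : c i₁ • g i₁ + ∑ j, c (i₁.succAbove j) • g (i₁.succAbove j) = 0 :=
          (Fin.sum_univ_succAbove (fun i => c i • g i) i₁).symm.trans hc
        have hrel : ∑ j, c (i₁.succAbove j) • g (i₁.succAbove j) = 0 := by
          rwa [hi₁, zero_smul, zero_add] at h0
        obtain ⟨j, hj⟩ := Fin.exists_succAbove_eq hne
        have := Fintype.linearIndependent_iff.mp hind _ hrel j
        rw [hj] at this
        exact hi₀ this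

include k in
lemma finite_monoidal [PreservesFiniteColimits F]
    (hP : ∀ X : C, ∃ (n : ℕ) (q : (⨁ fun _ : Fin n => P) ⟶ X), Epi q) :
    Finite {g : F ⟶ F // NatTrans.IsMonoidal g} := by
  haveI : FiniteDimensional k (F ⟶ F) := finiteDimensional_natTrans (k := k) F P hP
  suffices hfin : Set.Finite {g : F ⟶ F | NatTrans.IsMonoidal g} by
    exact Set.finite_coe_iff.mpr hfin
  by_contra hinf
  have hinf' : Set.Infinite {g : F ⟶ F | NatTrans.IsMonoidal g} := hinf
  set d := Module.finrank k (F ⟶ F) with hd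
  let E := hinf'.natEmbedding
  let g : Fin (d + 1) → (F ⟶ F) := fun i => (E (i : ℕ)).1
  have hginj : Function.Injective g := by
    intro a b hab
    have : E (a : ℕ) = E (b : ℕ) := Subtype.ext hab
    exact Fin.val_injective (E.injective this)
  have hgmono : ∀ i, NatTrans.IsMonoidal (g i) := fun i => (E (i : ℕ)).2
  have hind : LinearIndependent k g :=
    monoidal_linearIndependent (k := k) F P hP (d + 1) g hgmono hginj
  have hcard := hind.fintype_card_le_finrank
  rw [Fintype.card_fin] at hcard
  omega

end Monoidal

end MonoidalNatAutAux

/-- Let `C` be a finite tensor category over an algebraically closed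
field `k` and `F : C ⥤ C` a right exact `k`-linear strong monoidal functor. Then the
group `Aut_⊗(F)` of monoidal natural automorphisms of `F` is finite; in particular
`Aut_⊗(id_C)` is finite. -/
theorem monoidalNatAut_finite
    (k : Type*) [Field k] [IsAlgClosed k]
    -- C is a finite tensor category over k:
    {C : Type*} [Category C] [Abelian C] [Linear k C]
    [MonoidalCategory C] [MonoidalPreadditive C] [MonoidalLinear k C]
    [RigidCategory C] [Simple (𝟙_ C)]
    [∀ X : C, IsNoetherianObject X] [∀ X : C, IsArtinianObject X]
    [∀ X Y : C, FiniteDimensional k (X ⟶ Y)]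
    (P : C) [Projective P]
    (hP : ∀ X : C, ∃ (n : ℕ) (q : (⨁ fun _ : Fin n => P) ⟶ X), Epi q)
    -- F is a right exact k-linear strong monoidal endofunctor:
    (F : C ⥤ C) [F.Monoidal] [F.Additive] [F.Linear k] [PreservesFiniteColimits F] :
    Finite {g : F ⟶ F // NatTrans.IsMonoidal g ∧ IsIso g} ∧
      Finite {g : 𝟭 C ⟶ 𝟭 C // NatTrans.IsMonoidal g ∧ IsIso g} := by
  constructor
  · haveI h1 : Finite {g : F ⟶ F // NatTrans.IsMonoidal g} :=
      MonoidalNatAutAux.finite_monoidal (k := k) F P hP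
    exact Finite.of_injective
      (fun g : {g : F ⟶ F // NatTrans.IsMonoidal g ∧ IsIso g} =>
        (⟨g.1, g.2.1⟩ : {g : F ⟶ F // NatTrans.IsMonoidal g}))
      (fun a b hab => Subtype.ext (by simpa [Subtype.ext_iff] using hab))
  · haveI h1 : Finite {g : 𝟭 C ⟶ 𝟭 C // NatTrans.IsMonoidal g} :=
      MonoidalNatAutAux.finite_monoidal (k := k) (𝟭 C) P hP
    exact Finite.of_injective
      (fun g : {g : 𝟭 C ⟶ 𝟭 C // NatTrans.IsMonoidal g ∧ IsIso g} =>
        (⟨g.1, g.2.1⟩ : {g : 𝟭 C ⟶ 𝟭 C // NatTrans.IsMonoidal g}))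
      (fun a b hab => Subtype.ext (by simpa [Subtype.ext_iff] using hab))
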